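/- (Leave-one-dyad-out shortcut for Kronecker kernel ridge regression, Setting A.) Let K be an m×m and G a q×q symmetric positive semidefinite real matrix with mq ≥ 2, Y ∈ ℝ^{m×q}, λ > 0, Γ = G ⊗ K, y = vec(Y), and H^{KK} = Γ(Γ + λI)⁻¹. Fix a dyad index s (corresponding to instance i and task j, s = mj + i in 0-based indexing). Let Γ^{(s)} be Γ with row s and column s deleted, y^{(s)} be y with entry s deleted, and γ_s ∈ ℝ^{mq−1} be row s of Γ with entry s deleted. Then γ_sᵀ (Γ^{(s)} + λI)⁻¹ y^{(s)} = (H^{KK}_{s·} y − H^{KK}_{ss} Y_{ij}) / (1 − H^{KK}_{ss}). -/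

import Mathlib

open Matrix Kronecker

-- sum split lemma
lemma sum_split {α : Type*} [Fintype α] [DecidableEq α] (s : α) (f : α → ℝ) :
    ∑ t, f t = f s + ∑ t : {x // x ≠ s}, f t.val := by
  classical
  rw [← Finset.add_sum_erase _ f (Finset.mem_univ s)]
  congr 1
  exact Finset.sum_subtype (p := fun x => x ≠ s) (Finset.univ.erase s) (fun x => by simp) f

-- kronecker of PSD is PSD
lemma psd_kron {m q : ℕ} {K : Matrix (Fin m) (Fin m) ℝ} (hK : K.PosSemidef)
    {G : Matrix (Fin q) (Fin q) ℝ} (hG : G.PosSemidef) : (G ⊗ₖ K).PosSemidef := by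
  obtain ⟨B, hB⟩ := (show ∃ B : Matrix (Fin q) (Fin q) ℝ, G = Bᴴ * B by
    open scoped MatrixOrder in
    obtain ⟨B, hB⟩ := CStarAlgebra.nonneg_iff_eq_star_mul_self.mp hG.nonneg
    exact ⟨B, by simpa [star_eq_conjTranspose] using hB⟩)
  obtain ⟨C, hC⟩ := (show ∃ C : Matrix (Fin m) (Fin m) ℝ, K = Cᴴ * C by
    open scoped MatrixOrder in
    obtain ⟨C, hC⟩ := CStarAlgebra.nonneg_iff_eq_star_mul_self.mp hK.nonneg
    exact ⟨C, by simpa [star_eq_conjTranspose] using hC⟩)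
  have h : G ⊗ₖ K = (B ⊗ₖ C)ᴴ * (B ⊗ₖ C) := by
    rw [hB, hC, Matrix.mul_kronecker_mul]
    have hct : (B ⊗ₖ C)ᴴ = Bᴴ ⊗ₖ Cᴴ := by
      ext x y
      simp [Matrix.conjTranspose_apply, Matrix.kroneckerMap_apply]
    rw [hct]
  rw [h]
  exact Matrix.posSemidef_conjTranspose_mul_self _

-- lam • 1 posdef
lemma posdef_smul_one {n : Type*} [Fintype n] [DecidableEq n] {lam : ℝ} (hlam : 0 < lam) :
    (lam • (1 : Matrix n n ℝ)).PosDef := by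
  rw [Matrix.smul_one_eq_diagonal]
  exact Matrix.PosDef.diagonal fun _ => hlam

-- diagonal entry of posdef matrix is positive
lemma posdef_diag_pos {n : Type*} [Fintype n] [DecidableEq n] {A : Matrix n n ℝ}
    (hA : A.PosDef) (s : n) : 0 < A s s := by
  exact hA.diag_pos

/-- `vec` stacks the columns of a matrix into a single (column) vector, so the dyad
index `s = mj + i` corresponds to the pair `(j, i)` and `vec Y (j, i) = Y i j`. -/
def vecCols {m q : ℕ} (X : Matrix (Fin m) (Fin q) ℝ) : Fin q × Fin m → ℝ :=
  fun p => X p.2 p.1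

/-- leave-one-dyad-out shortcut for Kronecker KRR, Setting A:
with `Γ = G ⊗ K`, `y = vec Y` and `H^{KK} = Γ(Γ + λI)⁻¹`, training on the `mq−1`
dyads other than `s = (j, i)` and predicting at dyad `s` gives
`(H^{KK}_{s·} y − H^{KK}_{ss} Y_{ij}) / (1 − H^{KK}_{ss})`. -/
theorem two_step_krr_stmt13 {m q : ℕ} (hmq : 2 ≤ m * q)
    (K : Matrix (Fin m) (Fin m) ℝ) (hK : K.PosSemidef)
    (G : Matrix (Fin q) (Fin q) ℝ) (hG : G.PosSemidef)
    (Y : Matrix (Fin m) (Fin q) ℝ) (lam : ℝ) (hlam : 0 < lam)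
    (s : Fin q × Fin m)
    (Γ : Matrix (Fin q × Fin m) (Fin q × Fin m) ℝ) (hΓ : Γ = G ⊗ₖ K)
    (H : Matrix (Fin q × Fin m) (Fin q × Fin m) ℝ) (hH : H = Γ * (Γ + lam • 1)⁻¹)
    (Γdel : Matrix {x : Fin q × Fin m // x ≠ s} {x : Fin q × Fin m // x ≠ s} ℝ)
    (hΓdel : Γdel = Γ.submatrix (fun x => x.val) (fun x => x.val))
    (ydel : {x : Fin q × Fin m // x ≠ s} → ℝ) (hydel : ydel = fun x => vecCols Y x.val)
    (γs : {x : Fin q × Fin m // x ≠ s} → ℝ) (hγs : γs = fun x => Γ s x.val) :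
    γs ⬝ᵥ ((Γdel + lam • 1)⁻¹ *ᵥ ydel)
      = ((H *ᵥ vecCols Y) s - H s s * Y s.2 s.1) / (1 - H s s) := by
    classical
  -- basic positivity facts
  have hΓps : Γ.PosSemidef := by rw [hΓ]; exact psd_kron hK hG
  have hΓdelps : Γdel.PosSemidef := by rw [hΓdel]; exact hΓps.submatrix _
  set A := Γ + lam • (1 : Matrix (Fin q × Fin m) (Fin q × Fin m) ℝ) with hAdef
  set M := Γdel + lam • (1 : Matrix {x : Fin q × Fin m // x ≠ s} {x : Fin q × Fin m // x ≠ s} ℝ) with hMdef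
  have hA : A.PosDef := Matrix.PosDef.posSemidef_add hΓps (posdef_smul_one hlam)
  have hM : M.PosDef := Matrix.PosDef.posSemidef_add hΓdelps (posdef_smul_one hlam)
  have hAdet : IsUnit A.det := (Matrix.isUnit_iff_isUnit_det A).mp hA.isUnit
  have hMdet : IsUnit M.det := (Matrix.isUnit_iff_isUnit_det M).mp hM.isUnit
  set w : {x : Fin q × Fin m // x ≠ s} → ℝ := M⁻¹ *ᵥ ydel with hw
  set p : ℝ := γs ⬝ᵥ w with hp
  set c : Fin q × Fin m → ℝ := fun t => if h : t = s then 0 else w ⟨t, h⟩ with hc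
  set z : Fin q × Fin m → ℝ := fun t => if t = s then p else vecCols Y t with hz
  -- A entries off s
  have hAoff : ∀ (t : Fin q × Fin m) (u : {x : Fin q × Fin m // x ≠ s}), A t u.val =
      Γ t u.val + lam * (if t = u.val then 1 else 0) := by
    intro t u
    simp [hAdef, Matrix.add_apply, Matrix.smul_apply, Matrix.one_apply]
  -- key: A *ᵥ c = z
  have hAc : A *ᵥ c = z := by
    funext t
    have hsum : (A *ᵥ c) t = A t s * c s + ∑ u : {x : Fin q × Fin m // x ≠ s}, A t u.val * c u.val := by
      rw [Matrix.mulVec, dotProduct]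
      exact sum_split s (fun u => A t u * c u)
    have hcs : c s = 0 := by simp [hc]
    have hcu : ∀ u : {x : Fin q × Fin m // x ≠ s}, c u.val = w u := by
      intro u; simp [hc, u.prop]
    by_cases ht : t = s
    · have : ∑ u : {x : Fin q × Fin m // x ≠ s}, A t u.val * c u.val = γs ⬝ᵥ w := by
        rw [dotProduct]
        refine Finset.sum_congr rfl fun u _ => ?_
        rw [hcu u, hAoff, hγs, ht]
        have hne : ¬ s = u.val := fun h => u.prop h.symm
        simp [hne]
      rw [hsum, hcs, this]
      simp [hz, hp, ht]
    · have hMw : (M *ᵥ w) ⟨t, ht⟩ = ydel ⟨t, ht⟩ := by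
        rw [hw, Matrix.mulVec_mulVec, Matrix.mul_nonsing_inv M hMdet, Matrix.one_mulVec]
      have : ∑ u : {x : Fin q × Fin m // x ≠ s}, A t u.val * c u.val = (M *ᵥ w) ⟨t, ht⟩ := by
        rw [Matrix.mulVec, dotProduct]
        refine Finset.sum_congr rfl fun u _ => ?_
        rw [hcu u, hAoff, hMdef, hΓdel]
        simp [Matrix.add_apply, Matrix.smul_apply, Matrix.one_apply, Matrix.submatrix_apply,
          Subtype.ext_iff]
      rw [hsum, hcs, this, hMw]
      simp [hz, ht, hydel]
  -- hence c = A⁻¹ z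
  have hcz : c = A⁻¹ *ᵥ z := by
    rw [← hAc, Matrix.mulVec_mulVec, Matrix.nonsing_inv_mul A hAdet, Matrix.one_mulVec]
  -- prediction at s on modified targets z equals p
  have hHz : (H *ᵥ z) s = p := by
    have : H *ᵥ z = Γ *ᵥ c := by
      rw [hH, ← Matrix.mulVec_mulVec, ← hcz]
    rw [this, Matrix.mulVec, dotProduct, sum_split s (fun u => Γ s u * c u)]
    have hcs : c s = 0 := by simp [hc]
    rw [hcs, mul_zero, zero_add, hp, dotProduct]
    refine Finset.sum_congr rfl fun u _ => ?_
    rw [hγs]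
    simp [hc, u.prop]
  -- z = y + (p - y_s) • e_s
  have hzy : z = vecCols Y + (p - vecCols Y s) • (Pi.single s 1 : (Fin q × Fin m) → ℝ) := by
    funext t
    by_cases ht : t = s
    · subst ht; simp [hz]
    · simp [hz, ht, Pi.single_apply]
  -- so p = (H y)_s + (p - y_s) * H_{ss}
  have h1 : (H *ᵥ z) s = (H *ᵥ vecCols Y) s + (p - vecCols Y s) * H s s := by
    rw [hzy, Matrix.mulVec_add, Matrix.mulVec_smul]
    simp [Matrix.mulVec_single]
  have hkey : p = (H *ᵥ vecCols Y) s + (p - vecCols Y s) * H s s := by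
    rw [← h1, hHz]
  -- H s s < 1
  have hHs : H s s < 1 := by
    have hHform : H = 1 - lam • A⁻¹ := by
      rw [hH, show Γ = A - lam • 1 by rw [hAdef]; abel]
      rw [Matrix.sub_mul, Matrix.mul_nonsing_inv A hAdet, Matrix.smul_mul, Matrix.one_mul]
    have hAinv : (A⁻¹).PosDef := hA.inv
    have hdiag : 0 < A⁻¹ s s := posdef_diag_pos hAinv s
    rw [hHform]
    simp only [Matrix.sub_apply, Matrix.smul_apply, Matrix.one_apply_eq, smul_eq_mul]
    nlinarith
  have hne : 1 - H s s ≠ 0 := by linarith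
  have hvec : vecCols Y s = Y s.2 s.1 := rfl
  rw [← hvec]
  field_simp
  linear_combination hkey
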